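/- For every prime p and every integer r ≥ 0, the sum ∑_{k=r}^∞ P(p, k) converges and satisfies ∑_{k=r}^∞ P(p, k) ≤ 8·p^{−r²}. -/

import Mathlib

/-- The Cohen–Lenstra probability that a random abelian `p`-group has rank `r`:
`P(p, r) = p^(-r²) · (∏_{i=1}^∞ (1 - p^{-i})) / (∏_{i=1}^r (1 - p^{-i}))²`. -/
noncomputable def CLrank (p r : ℕ) : ℝ :=
  (∏' i : ℕ, (1 - 1 / (p : ℝ) ^ (i + 1))) /
    ((p : ℝ) ^ (r ^ 2) * (∏ i ∈ Finset.range r, (1 - 1 / (p : ℝ) ^ (i + 1))) ^ 2)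

section aux

variable {p : ℕ}

private lemma CL_P2 (hp : p.Prime) : (2 : ℝ) ≤ (p : ℝ) := by
  exact_mod_cast hp.two_le

private lemma CL_x_pos (hp : p.Prime) (i : ℕ) : 0 < 1 - 1 / (p : ℝ) ^ (i + 1) := by
  have h2 := CL_P2 hp
  have h1 : (1 : ℝ) < (p : ℝ) := by linarith
  have : 1 / (p : ℝ) ^ (i + 1) < 1 := by
    rw [div_lt_one (by positivity)]
    exact one_lt_pow₀ h1 (by omega)
  linarith

private lemma CL_x_le_one (hp : p.Prime) (i : ℕ) : 1 - 1 / (p : ℝ) ^ (i + 1) ≤ 1 := by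
  have h2 := CL_P2 hp
  have : 0 ≤ 1 / (p : ℝ) ^ (i + 1) := by positivity
  linarith

/-- `1 - ∑ a ≤ ∏ (1 - a)` for `a i ∈ [0,1]`. -/
private lemma CL_one_sub_sum_le (a : ℕ → ℝ) (h0 : ∀ i, 0 ≤ a i) (h1 : ∀ i, a i ≤ 1) (n : ℕ) :
    1 - ∑ i ∈ Finset.range n, a i ≤ ∏ i ∈ Finset.range n, (1 - a i) := by
  induction n with
  | zero => simp
  | succ n ih =>
    have hpn : 0 ≤ ∏ i ∈ Finset.range n, (1 - a i) :=
      Finset.prod_nonneg fun i _ => by linarith [h1 i]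
    have hpn1 : ∏ i ∈ Finset.range n, (1 - a i) ≤ 1 :=
      Finset.prod_le_one (fun i _ => by linarith [h1 i]) (fun i _ => by linarith [h0 i])
    rw [Finset.prod_range_succ, Finset.sum_range_succ]
    nlinarith [h0 n, h1 n]

/-- Lower bound `1/4` on the partial products. -/
private lemma CL_Q_ge (hp : p.Prime) (k : ℕ) :
    (1 : ℝ) / 4 ≤ ∏ i ∈ Finset.range k, (1 - 1 / (p : ℝ) ^ (i + 1)) := by
  have h2 := CL_P2 hp
  cases k with
  | zero => norm_num
  | succ n =>
    rw [Finset.prod_range_succ']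
    have hx0 : (1 : ℝ) / 2 ≤ 1 - 1 / (p : ℝ) ^ (0 + 1) := by
      have : 1 / (p : ℝ) ^ (0 + 1) ≤ 1 / 2 := by
        rw [pow_one]
        apply one_div_le_one_div_of_le <;> linarith
      linarith
    have hsum : ∑ i ∈ Finset.range n, 1 / (p : ℝ) ^ (i + 1 + 1) ≤ 1 / 2 := by
      have hterm : ∀ i ∈ Finset.range n,
          1 / (p : ℝ) ^ (i + 1 + 1) ≤ (1 / 4) * (1 / 2) ^ i := by
        intro i _
        have : (2 : ℝ) ^ (i + 2) ≤ (p : ℝ) ^ (i + 1 + 1) := by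
          apply pow_le_pow_left₀ (by norm_num) h2
        have h4 : (1 : ℝ) / (2 : ℝ) ^ (i + 2) = (1 / 4) * (1 / 2) ^ i := by
          field_simp [pow_add]
          rw [pow_add, mul_right_comm, ← mul_pow]; norm_num
        calc (1 : ℝ) / (p : ℝ) ^ (i + 1 + 1) ≤ 1 / (2 : ℝ) ^ (i + 2) := by
              apply one_div_le_one_div_of_le (by positivity) this
          _ = (1 / 4) * (1 / 2) ^ i := h4
      calc ∑ i ∈ Finset.range n, 1 / (p : ℝ) ^ (i + 1 + 1)
          ≤ ∑ i ∈ Finset.range n, (1 / 4 : ℝ) * (1 / 2) ^ i :=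
            Finset.sum_le_sum hterm
        _ = (1 / 4) * ∑ i ∈ Finset.range n, (1 / 2 : ℝ) ^ i := by
            rw [Finset.mul_sum]
        _ ≤ (1 / 4) * (1 - 1 / 2)⁻¹ := by
            apply mul_le_mul_of_nonneg_left _ (by norm_num)
            calc ∑ i ∈ Finset.range n, (1 / 2 : ℝ) ^ i
                ≤ ∑' i : ℕ, (1 / 2 : ℝ) ^ i :=
                  Summable.sum_le_tsum _ (fun i _ => by positivity)
                    (summable_geometric_of_lt_one (by norm_num) (by norm_num))
              _ = (1 - 1 / 2)⁻¹ := tsum_geometric_of_lt_one (by norm_num) (by norm_num)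
        _ = 1 / 2 := by norm_num
    have hrest : (1 : ℝ) / 2 ≤ ∏ i ∈ Finset.range n, (1 - 1 / (p : ℝ) ^ (i + 1 + 1)) := by
      have := CL_one_sub_sum_le (fun i => 1 / (p : ℝ) ^ (i + 1 + 1))
        (fun i => by positivity)
        (fun i => by linarith [CL_x_pos hp (i + 1)]) n
      linarith
    have h0' : (0:ℝ) ≤ 1 - 1 / (p : ℝ) ^ (0 + 1) := by linarith
    nlinarith [Finset.prod_nonneg (fun i (_ : i ∈ Finset.range n) =>
      (CL_x_pos hp (i + 1)).le)]

/-- The infinite product has product equal to the infimum of finite products. -/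
private lemma CL_hasProd (hp : p.Prime) :
    HasProd (fun i : ℕ => 1 - 1 / (p : ℝ) ^ (i + 1))
      (⨅ s : Finset ℕ, ∏ i ∈ s, (1 - 1 / (p : ℝ) ^ (i + 1))) := by
  apply tendsto_atTop_ciInf
  · intro s t hst
    show (∏ i ∈ t, (1 - 1 / (p : ℝ) ^ (i + 1))) ≤ ∏ i ∈ s, (1 - 1 / (p : ℝ) ^ (i + 1))
    have : ∏ i ∈ t, (1 - 1 / (p : ℝ) ^ (i + 1))
        = (∏ i ∈ s, (1 - 1 / (p : ℝ) ^ (i + 1))) *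
          ∏ i ∈ t \ s, (1 - 1 / (p : ℝ) ^ (i + 1)) :=
      (Finset.prod_sdiff hst).symm.trans (mul_comm _ _)
    rw [this]
    have h1 : ∏ i ∈ t \ s, (1 - 1 / (p : ℝ) ^ (i + 1)) ≤ 1 :=
      Finset.prod_le_one (fun i _ => (CL_x_pos hp i).le) (fun i _ => CL_x_le_one hp i)
    have h2 : 0 ≤ ∏ i ∈ s, (1 - 1 / (p : ℝ) ^ (i + 1)) :=
      Finset.prod_nonneg fun i _ => (CL_x_pos hp i).le
    nlinarith
  · exact ⟨0, by rintro x ⟨s, rfl⟩; exact Finset.prod_nonneg fun i _ => (CL_x_pos hp i).le⟩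

private lemma CL_C_le_Q (hp : p.Prime) (k : ℕ) :
    (∏' i : ℕ, (1 - 1 / (p : ℝ) ^ (i + 1)))
      ≤ ∏ i ∈ Finset.range k, (1 - 1 / (p : ℝ) ^ (i + 1)) := by
  rw [(CL_hasProd hp).tprod_eq]
  have hbdd : BddBelow (Set.range fun s : Finset ℕ =>
      ∏ i ∈ s, (1 - 1 / (p : ℝ) ^ (i + 1))) := by
    refine ⟨0, ?_⟩
    rintro x ⟨s, rfl⟩
    exact Finset.prod_nonneg fun i _ => (CL_x_pos hp i).le
  exact ciInf_le hbdd (Finset.range k)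

private lemma CL_C_nonneg (hp : p.Prime) :
    0 ≤ ∏' i : ℕ, (1 - 1 / (p : ℝ) ^ (i + 1)) := by
  rw [(CL_hasProd hp).tprod_eq]
  exact le_ciInf fun s => Finset.prod_nonneg fun i _ => (CL_x_pos hp i).le

private lemma CL_le (hp : p.Prime) (m : ℕ) :
    CLrank p m ≤ 4 / (p : ℝ) ^ (m ^ 2) := by
  have h2 := CL_P2 hp
  set Q := ∏ i ∈ Finset.range m, (1 - 1 / (p : ℝ) ^ (i + 1)) with hQ
  have hQ4 : (1:ℝ)/4 ≤ Q := CL_Q_ge hp m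
  have hQpos : 0 < Q := by linarith
  have hppos : (0:ℝ) < (p : ℝ) ^ (m ^ 2) := by positivity
  have hCle : (∏' i : ℕ, (1 - 1 / (p : ℝ) ^ (i + 1))) ≤ Q := CL_C_le_Q hp m
  unfold CLrank
  rw [div_le_div_iff₀ (by positivity) hppos]
  calc (∏' i : ℕ, (1 - 1 / (p : ℝ) ^ (i + 1))) * (p : ℝ) ^ (m ^ 2)
      ≤ Q * (p : ℝ) ^ (m ^ 2) := by
        apply mul_le_mul_of_nonneg_right hCle hppos.le
    _ = 1 * (Q * (p : ℝ) ^ (m ^ 2)) := by ring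
    _ ≤ (4 * Q) * (Q * (p : ℝ) ^ (m ^ 2)) :=
        mul_le_mul_of_nonneg_right (by linarith) (by positivity)
    _ = 4 * ((p : ℝ) ^ (m ^ 2) * Q ^ 2) := by ring

private lemma CL_nonneg (hp : p.Prime) (m : ℕ) : 0 ≤ CLrank p m := by
  unfold CLrank
  apply div_nonneg (CL_C_nonneg hp)
  positivity

end aux

/-- The tail sum `∑_{k ≥ r} P(p, k)` converges and is at most `8·p^(-r²)`. -/
theorem CLrank_tail_sum (p : ℕ) (hp : p.Prime) (r : ℕ) :
    Summable (fun k : ℕ => CLrank p (r + k)) ∧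
      ∑' k : ℕ, CLrank p (r + k) ≤ 8 / (p : ℝ) ^ (r ^ 2) := by
  have h2 := CL_P2 hp
  set g := fun k : ℕ => (4 / (p : ℝ) ^ (r ^ 2)) * (1 / (p : ℝ)) ^ k with hg
  have hle : ∀ k : ℕ, CLrank p (r + k) ≤ g k := by
    intro k
    refine (CL_le hp (r + k)).trans ?_
    have hexp : r ^ 2 + k ≤ (r + k) ^ 2 := by
      have hk : k ≤ k ^ 2 := Nat.le_self_pow (by norm_num) k
      have hexpand : (r + k) ^ 2 = r ^ 2 + 2 * r * k + k ^ 2 := by ring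
      omega
    have hpow : (p : ℝ) ^ (r ^ 2 + k) ≤ (p : ℝ) ^ ((r + k) ^ 2) :=
      pow_le_pow_right₀ (by linarith) hexp
    have : g k = 4 / (p : ℝ) ^ (r ^ 2 + k) := by
      show 4 / (p : ℝ) ^ (r ^ 2) * (1 / (p : ℝ)) ^ k = _
      rw [pow_add, div_pow, one_pow]
      ring
    rw [this]
    apply div_le_div_of_nonneg_left (by norm_num) (by positivity) hpow
  have hgs : Summable g := by
    apply Summable.mul_left
    apply summable_geometric_of_lt_one (by positivity)
    rw [div_lt_one (by linarith)]; linarith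
  have hsum : Summable (fun k : ℕ => CLrank p (r + k)) :=
    Summable.of_nonneg_of_le (fun k => CL_nonneg hp (r + k)) hle hgs
  refine ⟨hsum, ?_⟩
  calc ∑' k : ℕ, CLrank p (r + k) ≤ ∑' k, g k := Summable.tsum_le_tsum hle hsum hgs
    _ = (4 / (p : ℝ) ^ (r ^ 2)) * (1 - 1 / (p : ℝ))⁻¹ := by
        rw [hg, tsum_mul_left, tsum_geometric_of_lt_one (by positivity)
          (by rw [div_lt_one (by linarith)]; linarith)]
    _ ≤ 8 / (p : ℝ) ^ (r ^ 2) := by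
        have h1 : (1 - 1 / (p : ℝ))⁻¹ ≤ 2 := by
          rw [inv_le_comm₀ (by rw [sub_pos, div_lt_one] <;> linarith) (by norm_num)]
          have : 1 / (p : ℝ) ≤ 1 / 2 := by
            apply one_div_le_one_div_of_le <;> linarith
          linarith
        have h0 : (0:ℝ) < (p : ℝ) ^ (r ^ 2) := by positivity
        rw [div_mul_eq_mul_div, div_le_div_iff₀ h0 h0]
        nlinarith
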